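/- For all integers n, m, t with n ≥ m ≥ t ≥ 1, the minimum size of a covering design satisfies the Erdős–Spencer upper bound C(n,m,t) < (binom(n,t)/binom(m,t)) · (1 + log binom(m,t)) + 1, where log denotes the natural logarithm. -/

import Mathlib

open Finset

lemma count_supersets (n m t : ℕ) (htm : t ≤ m) (T : Finset (Fin n)) (hT : T.card = t) :
    ((Finset.powersetCard m (Finset.univ : Finset (Fin n))).filter (fun A => T ⊆ A)).card
      = (n - t).choose (m - t) := by
  have h1 : ((Finset.powersetCard m (Finset.univ : Finset (Fin n))).filter (fun A => T ⊆ A)).card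
      = (Finset.powersetCard (m - t) Tᶜ).card := by
    apply Finset.card_bij' (fun A _ => A \ T) (fun B _ => B ∪ T)
    · intro A hA
      simp only [mem_filter, Finset.mem_powersetCard_univ] at hA
      rw [Finset.mem_powersetCard]
      constructor
      · intro x hx; simp only [Finset.mem_sdiff] at hx; simp [Finset.mem_compl, hx.2]
      · rw [Finset.card_sdiff_of_subset hA.2, hA.1, hT]
    · intro B hB
      rw [Finset.mem_powersetCard] at hB
      have hdisj : Disjoint B T := by
        rw [Finset.disjoint_right]; intro x hx hxB
        exact (Finset.mem_compl.mp (hB.1 hxB)) hx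
      simp only [mem_filter, Finset.mem_powersetCard_univ]
      constructor
      · rw [Finset.card_union_of_disjoint hdisj, hB.2, hT, Nat.sub_add_cancel htm]
      · exact Finset.subset_union_right
    · intro A hA
      simp only [mem_filter, Finset.mem_powersetCard_univ] at hA
      exact Finset.sdiff_union_of_subset hA.2
    · intro B hB
      rw [Finset.mem_powersetCard] at hB
      have hdisj : Disjoint B T := by
        rw [Finset.disjoint_right]; intro x hx hxB
        exact (Finset.mem_compl.mp (hB.1 hxB)) hx
      exact Finset.union_sdiff_cancel_right hdisj
  rw [h1, Finset.card_powersetCard, Finset.card_compl, hT, Fintype.card_fin]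

lemma avg_step (n m t : ℕ) (ht : 1 ≤ t) (htm : t ≤ m) (hmn : m ≤ n)
    (u : Finset (Finset (Fin n))) (hu : ∀ T ∈ u, T.card = t) :
    ∃ A : Finset (Fin n), A.card = m ∧
      ((u.filter (fun T => ¬ T ⊆ A)).card : ℝ)
        ≤ u.card * (1 - (m.choose t : ℝ) / (n.choose t : ℝ)) := by
  set 𝒜 := Finset.powersetCard m (Finset.univ : Finset (Fin n)) with h𝒜
  have hsum : ∑ A ∈ 𝒜, (u.filter (fun T => T ⊆ A)).card = u.card * (n - t).choose (m - t) := by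
    have : ∀ A ∈ 𝒜, (u.filter (fun T => T ⊆ A)).card = ∑ T ∈ u, if T ⊆ A then 1 else 0 :=
      fun A _ => Finset.card_filter _ _
    rw [Finset.sum_congr rfl this, Finset.sum_comm]
    rw [Finset.sum_congr rfl (fun T hT => ?_), Finset.sum_const, smul_eq_mul]
    rw [← Finset.card_filter]
    exact count_supersets n m t htm T (hu T hT)
  have hcard𝒜 : 𝒜.card = n.choose m := by
    rw [h𝒜, Finset.card_powersetCard, Finset.card_univ, Fintype.card_fin]
  have h𝒜ne : 𝒜.Nonempty := by
    rw [← Finset.card_pos, hcard𝒜]; exact Nat.choose_pos hmn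
  -- exists A with above-average coverage
  obtain ⟨A, hA𝒜, hA⟩ := Finset.exists_le_of_sum_le h𝒜ne (f := fun _ => u.card * (n - t).choose (m - t))
    (g := fun A => (u.filter (fun T => T ⊆ A)).card * n.choose m) (by
      rw [Finset.sum_const, hcard𝒜, smul_eq_mul, ← Finset.sum_mul, hsum]; ring_nf; rfl)
  have hAm : A.card = m := Finset.mem_powersetCard_univ.mp hA𝒜
  refine ⟨A, hAm, ?_⟩
  have hN : 0 < (n.choose t : ℝ) := by exact_mod_cast Nat.choose_pos (htm.trans hmn)
  have hM : 0 < (n.choose m : ℝ) := by exact_mod_cast Nat.choose_pos hmn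
  -- covered count c
  set c := (u.filter (fun T => T ⊆ A)).card with hc
  have hle : c ≤ u.card := Finset.card_filter_le _ _
  have hsplit : (u.filter (fun T => ¬ T ⊆ A)).card = u.card - c := by
    have := Finset.card_filter_add_card_filter_not (s := u) (p := fun T => T ⊆ A)
    omega
  have hD : 0 < ((n - t).choose (m - t) : ℝ) := by
    exact_mod_cast Nat.choose_pos (Nat.sub_le_sub_right hmn t)
  have hid : (n.choose m : ℝ) * (m.choose t : ℝ)
      = (n.choose t : ℝ) * ((n - t).choose (m - t) : ℝ) := by
    exact_mod_cast congrArg (Nat.cast : ℕ → ℝ) (Nat.choose_mul (n := n) htm)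
  have hb : (0:ℝ) ≤ (m.choose t : ℝ) := Nat.cast_nonneg _
  have hA' : (u.card : ℝ) * ((n - t).choose (m - t) : ℝ) ≤ (c : ℝ) * (n.choose m : ℝ) := by
    exact_mod_cast hA
  have hkey : (u.card : ℝ) * (m.choose t : ℝ) / (n.choose t : ℝ) ≤ (c : ℝ) := by
    rw [div_le_iff₀ hN]
    nlinarith
  rw [hsplit, Nat.cast_sub hle, mul_one_sub, mul_div_assoc] at *
  linarith

lemma greedy (n m t : ℕ) (ht : 1 ≤ t) (htm : t ≤ m) (hmn : m ≤ n) (j : ℕ) :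
    ∃ L : List (Finset (Fin n)), L.length = j ∧ (∀ A ∈ L, A.card = m) ∧
      ((((Finset.powersetCard t (Finset.univ : Finset (Fin n)))).filter
          (fun T => ∀ A ∈ L, ¬ T ⊆ A)).card : ℝ)
        ≤ (n.choose t : ℝ) * (1 - (m.choose t : ℝ) / (n.choose t : ℝ)) ^ j := by
  induction j with
  | zero =>
    refine ⟨[], rfl, by simp, ?_⟩
    rw [pow_zero, mul_one]
    have : ((Finset.powersetCard t (Finset.univ : Finset (Fin n)))).filter
        (fun T => ∀ A ∈ ([] : List (Finset (Fin n))), ¬ T ⊆ A)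
        = Finset.powersetCard t (Finset.univ : Finset (Fin n)) := by
      apply Finset.filter_true_of_mem; intro T _; simp
    rw [this, Finset.card_powersetCard, Finset.card_univ, Fintype.card_fin]
  | succ j ih =>
    obtain ⟨L, hlen, hcards, hbound⟩ := ih
    set u := (((Finset.powersetCard t (Finset.univ : Finset (Fin n)))).filter
      (fun T => ∀ A ∈ L, ¬ T ⊆ A)) with hu_def
    have hu : ∀ T ∈ u, T.card = t := by
      intro T hT
      exact Finset.mem_powersetCard_univ.mp (Finset.mem_filter.mp hT).1
    obtain ⟨A, hAm, hAle⟩ := avg_step n m t ht htm hmn u hu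
    refine ⟨A :: L, by simp [hlen], ?_, ?_⟩
    · intro B hB
      rcases List.mem_cons.mp hB with h | h
      · rw [h]; exact hAm
      · exact hcards B h
    · have heq : (((Finset.powersetCard t (Finset.univ : Finset (Fin n)))).filter
          (fun T => ∀ B ∈ (A :: L), ¬ T ⊆ B)) = u.filter (fun T => ¬ T ⊆ A) := by
        rw [hu_def, Finset.filter_filter]
        apply Finset.filter_congr
        intro T _
        simp only [List.mem_cons]
        constructor
        · intro h; exact ⟨fun B hB => h B (Or.inr hB), h A (Or.inl rfl)⟩
        · rintro ⟨h1, h2⟩ B (rfl | hB)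
          · exact h2
          · exact h1 B hB
      rw [heq]
      have hbN : (m.choose t : ℝ) / (n.choose t : ℝ) ≤ 1 := by
        rw [div_le_one (by exact_mod_cast Nat.choose_pos (htm.trans hmn))]
        exact_mod_cast Nat.choose_le_choose t hmn
      have h1 : (0:ℝ) ≤ 1 - (m.choose t : ℝ) / (n.choose t : ℝ) := by linarith
      calc ((u.filter (fun T => ¬ T ⊆ A)).card : ℝ)
          ≤ u.card * (1 - (m.choose t : ℝ) / (n.choose t : ℝ)) := hAle
        _ ≤ ((n.choose t : ℝ) * (1 - (m.choose t : ℝ) / (n.choose t : ℝ)) ^ j)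
              * (1 - (m.choose t : ℝ) / (n.choose t : ℝ)) :=
            mul_le_mul_of_nonneg_right hbound h1
        _ = (n.choose t : ℝ) * (1 - (m.choose t : ℝ) / (n.choose t : ℝ)) ^ (j+1) := by ring

/-- An `(n,m,t)`-covering design of size `k`. -/
def IsCoveringDesign (n m t k : ℕ) (S : Fin k → Finset (Fin n)) : Prop :=
  (∀ i, (S i).card = m) ∧ ∀ T : Finset (Fin n), T.card ≤ t → ∃ i, T ⊆ S i

/-- `C(n,m,t)`: the minimum size of an `(n,m,t)`-covering design. -/
noncomputable def coveringNumber (n m t : ℕ) : ℕ :=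
  sInf {k : ℕ | ∃ S : Fin k → Finset (Fin n), IsCoveringDesign n m t k S}

/-- Erdős–Spencer upper bound:
`C(n,m,t) < (binom(n,t)/binom(m,t)) · (1 + log binom(m,t)) + 1`. -/
theorem erdos_spencer_upper_bound (n m t : ℕ) (ht : 1 ≤ t) (htm : t ≤ m) (hmn : m ≤ n) :
    (coveringNumber n m t : ℝ) <
      (n.choose t : ℝ) / (m.choose t : ℝ) * (1 + Real.log (m.choose t)) + 1 := by
  set N := n.choose t with hNdef
  set b := m.choose t with hbdef
  have hbpos : 0 < b := Nat.choose_pos htm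
  have hNpos : 0 < N := Nat.choose_pos (htm.trans hmn)
  have hbR : (0:ℝ) < b := by exact_mod_cast hbpos
  have hNR : (0:ℝ) < N := by exact_mod_cast hNpos
  have hbN : (b:ℝ) ≤ N := by exact_mod_cast Nat.choose_le_choose t hmn
  set x : ℝ := (N : ℝ) / (b : ℝ) with hxdef
  have hxpos : 0 < x := div_pos hNR hbR
  have hlogb : 0 ≤ Real.log b := Real.log_nonneg (by exact_mod_cast hbpos)
  set j := ⌈x * Real.log b⌉₊ with hjdef
  obtain ⟨L, hlen, hcards, hbound⟩ := greedy n m t ht htm hmn j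
  set u := (((Finset.powersetCard t (Finset.univ : Finset (Fin n)))).filter
      (fun T => ∀ A ∈ L, ¬ T ⊆ A)) with hu_def
  -- bound on uncovered
  have hucard : (u.card : ℝ) ≤ x := by
    have h0 : (0:ℝ) ≤ 1 - (b:ℝ)/(N:ℝ) := by
      rw [sub_nonneg, div_le_one hNR]; exact hbN
    have h1 : (1 - (b:ℝ)/(N:ℝ)) ^ j ≤ Real.exp (-(b/N)) ^ j :=
      pow_le_pow_left₀ h0 (by linarith [Real.add_one_le_exp (-(b/N):ℝ)]) j
    have h2 : Real.exp (-((b:ℝ)/N)) ^ j = Real.exp (j * -((b:ℝ)/N)) :=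
      (Real.exp_nat_mul _ j).symm
    have h3 : Real.exp ((j:ℝ) * -((b:ℝ)/N)) ≤ Real.exp (-Real.log b) := by
      apply Real.exp_le_exp.mpr
      have hjge : x * Real.log b ≤ (j:ℝ) := Nat.le_ceil _
      have : Real.log b ≤ (j:ℝ) * ((b:ℝ)/N) := by
        have hxb : x * ((b:ℝ)/N) = 1 := by
          rw [hxdef]; field_simp
        calc Real.log b = (x * Real.log b) * ((b:ℝ)/N) := by
              rw [mul_comm x, mul_assoc, hxb, mul_one]
          _ ≤ (j:ℝ) * ((b:ℝ)/N) :=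
              mul_le_mul_of_nonneg_right hjge (by positivity)
      linarith
    have h4 : Real.exp (-Real.log b) = 1 / (b:ℝ) := by
      rw [Real.exp_neg, Real.exp_log hbR, one_div]
    calc (u.card : ℝ) ≤ (N:ℝ) * (1 - (b:ℝ)/N) ^ j := hbound
      _ ≤ (N:ℝ) * (1/(b:ℝ)) := by
          apply mul_le_mul_of_nonneg_left _ hNR.le
          rw [← h4]; rw [h2] at h1; exact h1.trans h3
      _ = x := by rw [hxdef]; ring
  -- complete the cover
  have hf : ∀ T : Finset (Fin n), T.card = t → ∃ A : Finset (Fin n), T ⊆ A ∧ A.card = m := by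
    intro T hT
    obtain ⟨A, h1, _, h3⟩ := Finset.exists_subsuperset_card_eq (n := m) (Finset.subset_univ T)
      (by rw [hT]; exact htm) (by rw [Finset.card_univ, Fintype.card_fin]; exact hmn)
    exact ⟨A, h1, h3⟩
  set f : Finset (Fin n) → Finset (Fin n) :=
    fun T => if h : T.card = t then (hf T h).choose else ∅ with hfdef
  have hfspec : ∀ T : Finset (Fin n), T.card = t → T ⊆ f T ∧ (f T).card = m := by
    intro T hT
    rw [hfdef]; simp only [dif_pos hT]
    exact (hf T hT).choose_spec
  set L2 := L ++ (u.toList.map f) with hL2def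
  set k := L2.length with hkdef
  have hklen : k = j + u.card := by
    rw [hkdef, hL2def, List.length_append, List.length_map, hlen, Finset.length_toList]
  -- the design
  have hmem_card : ∀ A ∈ L2, A.card = m := by
    intro A hA
    rcases List.mem_append.mp hA with h | h
    · exact hcards A h
    · obtain ⟨T, hT, rfl⟩ := List.mem_map.mp h
      have hTu : T ∈ u := (Finset.mem_toList).mp hT
      exact (hfspec T ((Finset.mem_filter.mp hTu).1 |> Finset.mem_powersetCard_univ.mp)).2
  have hcover : ∀ T0 : Finset (Fin n), T0.card ≤ t → ∃ A ∈ L2, T0 ⊆ A := by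
    intro T0 hT0
    obtain ⟨T, hsub, _, hTcard⟩ := Finset.exists_subsuperset_card_eq (n := t) (Finset.subset_univ T0)
      hT0 (by rw [Finset.card_univ, Fintype.card_fin]; exact htm.trans hmn)
    by_cases hc : ∀ A ∈ L, ¬ T ⊆ A
    · have hTu : T ∈ u := by
        rw [hu_def, Finset.mem_filter]
        exact ⟨Finset.mem_powersetCard_univ.mpr hTcard, hc⟩
      refine ⟨f T, ?_, hsub.trans (hfspec T hTcard).1⟩
      exact List.mem_append.mpr (Or.inr (List.mem_map.mpr ⟨T, (Finset.mem_toList).mpr hTu, rfl⟩))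
    · push_neg at hc
      obtain ⟨A, hAL, hTA⟩ := hc
      exact ⟨A, List.mem_append.mpr (Or.inl hAL), hsub.trans hTA⟩
  set S : Fin k → Finset (Fin n) := fun i => L2.get i with hSdef
  have hdesign : IsCoveringDesign n m t k S := by
    constructor
    · intro i; exact hmem_card _ (L2.get_mem i)
    · intro T hT
      obtain ⟨A, hAL2, hTA⟩ := hcover T hT
      obtain ⟨i, hi⟩ := List.mem_iff_get.mp hAL2
      exact ⟨i, by rw [show S i = L2.get i from rfl, hi]; exact hTA⟩
  have hCN : coveringNumber n m t ≤ k := Nat.sInf_le ⟨S, hdesign⟩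
  -- numerics
  have hjlt : (j : ℝ) < x * Real.log b + 1 := Nat.ceil_lt_add_one (by positivity)
  have : (coveringNumber n m t : ℝ) ≤ (k : ℝ) := by exact_mod_cast hCN
  have hkR : (k : ℝ) = (j : ℝ) + (u.card : ℝ) := by rw [hklen]; push_cast; ring
  calc (coveringNumber n m t : ℝ) ≤ (k : ℝ) := this
    _ = (j : ℝ) + (u.card : ℝ) := hkR
    _ < (x * Real.log b + 1) + x := by linarith
    _ = x * (1 + Real.log b) + 1 := by ring
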